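/- Let (A, w) be an EYM solution on (0, R) for some R > 0 with A(r) > 0 for all r ∈ (0, R). If there exists r₀ ∈ (0, R) such that A(r₀) > 1 − Λ·r₀²/3, then A(r) → +∞ and w'(r) → 0 as r → 0⁺. -/

import Mathlib

set_option maxHeartbeats 1000000

open Filter Topology Set

/-- The quantity Φ(r) = 1 − A(r) − (1 − w(r)²)²/r² − Λ·r². -/
noncomputable def Phi (Λ : ℝ) (A w : ℝ → ℝ) (r : ℝ) : ℝ :=
  1 - A r - (1 - (w r) ^ 2) ^ 2 / r ^ 2 - Λ * r ^ 2

/-- `(A, w)` is a static spherically symmetric Einstein SU(2)-Yang–Mills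
solution with cosmological constant `Λ` on the set `I`. -/
def IsEYM (Λ : ℝ) (A w : ℝ → ℝ) (I : Set ℝ) : Prop :=
  (∀ r ∈ I, DifferentiableAt ℝ A r) ∧
  (∀ r ∈ I, DifferentiableAt ℝ w r) ∧
  (∀ r ∈ I, DifferentiableAt ℝ (deriv w) r) ∧
  (∀ r ∈ I, r * deriv A r + 2 * A r * (deriv w r) ^ 2 = Phi Λ A w r) ∧
  (∀ r ∈ I, r ^ 2 * A r * deriv (deriv w) r + r * Phi Λ A w r * deriv w r
      + w r * (1 - (w r) ^ 2) = 0)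


lemma ev_gt (g : ℝ → ℝ) (u d : ℝ) (hg : HasDerivAt g d u) (hd : 0 < d) :
    ∀ᶠ t in 𝓝[>] u, g u < g t := by
  have h := hasDerivAt_iff_tendsto_slope.mp hg
  have h2 : ∀ᶠ t in 𝓝[≠] u, 0 < slope g u t :=
    h.eventually (isOpen_Ioi.eventually_mem hd)
  have h3 : ∀ᶠ t in 𝓝[>] u, 0 < slope g u t :=
    h2.filter_mono (nhdsWithin_mono u (fun x hx => ne_of_gt hx))
  filter_upwards [h3, self_mem_nhdsWithin] with t ht htu
  have htu' : (0:ℝ) < t - u := by simp only [mem_Ioi] at htu; linarith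
  rw [slope_def_field] at ht
  have := (div_pos_iff.mp ht)
  rcases this with ⟨h1, _⟩ | ⟨_, h2'⟩
  · linarith
  · linarith

lemma no_cross (v ψ : ℝ → ℝ) (s r₁ : ℝ) (hsr : s ≤ r₁)
    (hcont : ContinuousOn (fun t => v t - ψ t) (Icc s r₁))
    (hend : v r₁ < ψ r₁)
    (hstep : ∀ u ∈ Ico s r₁, v u = ψ u → ∃ t, u < t ∧ t ≤ r₁ ∧ ψ t ≤ v t) :
    ∀ t ∈ Icc s r₁, v t < ψ t := by
  by_contra hcon
  push_neg at hcon
  obtain ⟨t₀, ht₀, hv₀⟩ := hcon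
  set S : Set ℝ := Icc s r₁ ∩ (fun t => v t - ψ t) ⁻¹' (Ici 0) with hS
  have hSclosed : IsClosed S :=
    hcont.preimage_isClosed_of_isClosed isClosed_Icc isClosed_Ici
  have hSne : S.Nonempty := ⟨t₀, ht₀, by simp [mem_Ici]; linarith⟩
  have hSbdd : BddAbove S := (bddAbove_Icc).mono inter_subset_left
  set u := sSup S with hu
  have huS : u ∈ S := hSclosed.csSup_mem hSne hSbdd
  obtain ⟨huIcc, hupre⟩ := huS
  have hu2 : ψ u ≤ v u := by simpa [mem_Ici, sub_nonneg] using hupre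
  have hur : u < r₁ := by
    rcases lt_or_eq_of_le huIcc.2 with h | h
    · exact h
    · exfalso; rw [h] at hu2; linarith
  rcases eq_or_lt_of_le hu2 with heq | hlt
  · obtain ⟨t, htu, htr, htv⟩ := hstep u ⟨huIcc.1, hur⟩ heq.symm
    have : t ∈ S := ⟨⟨le_trans huIcc.1 htu.le, htr⟩, by simp [mem_Ici]; linarith⟩
    have := le_csSup hSbdd this
    linarith
  · have hposf : (0:ℝ) < v u - ψ u := by linarith
    have hev : ∀ᶠ x in 𝓝[Icc s r₁] u, 0 < v x - ψ x :=
      (hcont u huIcc).eventually (isOpen_Ioi.eventually_mem hposf)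
    have hsub : Ioc u r₁ ⊆ Icc s r₁ := fun x hx => ⟨le_trans huIcc.1 hx.1.le, hx.2⟩
    have hev2 : ∀ᶠ x in 𝓝[Ioc u r₁] u, 0 < v x - ψ x :=
      hev.filter_mono (nhdsWithin_mono u hsub)
    have hne : (𝓝[Ioc u r₁] u).NeBot := by
      rw [← mem_closure_iff_nhdsWithin_neBot, closure_Ioc (ne_of_lt hur)]
      exact ⟨le_refl u, hur.le⟩
    obtain ⟨t, htmem, htpos⟩ := (hev2.and self_mem_nhdsWithin).exists
    have : t ∈ S := ⟨hsub htpos, by simp [mem_Ici]; linarith⟩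
    have := le_csSup hSbdd this
    have : u < t := htpos.1
    linarith


lemma core (Λ L c a b M u r₁ A₀ w₀ P e p su sr : ℝ)
    (hL : 1 + |Λ| ≤ L)
    (hc : 0 < c)
    (hu : 0 < u) (hur : u ≤ r₁) (hu1 : u ≤ 1)
    (hsu2 : su * su = u) (hsupos : 0 < su)
    (hsr2 : sr * sr = r₁) (hsrpos : 0 < sr) (hsusr : su ≤ sr)
    (hA : c / 2 ≤ u * A₀) (hA0 : 0 < A₀)
    (he : e = 1 ∨ e = -1)
    (hp : p = a * u + b * su)
    (ha : 0 < a) (hb1 : 1 ≤ b)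
    (hb2 : 16 * L * (a * (r₁ * sr)) ≤ b * c)
    (hC₁ : 16 * L * r₁ ≤ c)
    (hw : w₀ ^ 2 ≤ M ^ 2)
    (hb3 : 4 * M ^ 2 ≤ b ^ 2 * c) :
    0 < u * (A₀ - 1 + P ^ 2 / u ^ 2 + Λ * u ^ 2) * p - e * (w₀ * P)
        - u ^ 2 * A₀ * (a + b / (2 * su)) := by
  have hLpos : (0:ℝ) < L := lt_of_lt_of_le (by positivity) hL
  have hbpos : (0:ℝ) < b := lt_of_lt_of_le one_pos hb1
  have hppos : 0 < p := by rw [hp]; positivity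
  have hbsup : b * su ≤ p := by
    rw [hp]; linarith only [mul_pos ha hu]
  -- decomposition identity
  have hXeq : u * (A₀ - 1 + P ^ 2 / u ^ 2 + Λ * u ^ 2) * p - e * (w₀ * P)
      - u ^ 2 * A₀ * (a + b / (2 * su))
      = u * A₀ * b * su / 2 + (P ^ 2 * p / u - e * (w₀ * P))
        - u * (1 - Λ * u ^ 2) * p := by
    have hsune : su ≠ 0 := ne_of_gt hsupos
    subst hsu2
    subst hp
    field_simp
    ring
  rw [hXeq]
  have hcb : (0:ℝ) < c * b * su := by positivity
  have t1 : c * b * su / 4 ≤ u * A₀ * b * su / 2 := by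
    have h0 : (0:ℝ) ≤ b * su := by positivity
    have := mul_le_mul_of_nonneg_right hA h0
    nlinarith only [this]
  -- AM-GM on the source term
  have hsq' : 0 ≤ 4 * P ^ 2 * p ^ 2 - 4 * e * w₀ * P * p * u + w₀ ^ 2 * u ^ 2 := by
    have : (2 * P * p - e * w₀ * u) ^ 2
        = 4 * P ^ 2 * p ^ 2 - 4 * e * w₀ * P * p * u + w₀ ^ 2 * u ^ 2 := by
      rcases he with h | h <;> subst h <;> ring
    rw [← this]; exact sq_nonneg _
  have expand : (P ^ 2 * p / u - e * (w₀ * P) + M ^ 2 * (u / (4 * p))) * (4 * p * u)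
      = 4 * P ^ 2 * p ^ 2 - 4 * e * w₀ * P * p * u + M ^ 2 * u ^ 2 := by
    field_simp
  have t2 : -(M ^ 2 * (u / (4 * p))) ≤ P ^ 2 * p / u - e * (w₀ * P) := by
    have hkey : 0 ≤ (P ^ 2 * p / u - e * (w₀ * P) + M ^ 2 * (u / (4 * p))) * (4 * p * u) := by
      rw [expand]
      have h9 := mul_le_mul_of_nonneg_right hw (sq_nonneg u)
      linarith only [h9, hsq']
    have hpu : (0:ℝ) < 4 * p * u := by positivity
    linarith only [(mul_nonneg_iff_of_pos_right hpu).mp hkey]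
  -- bound on the potential term
  have t3 : u * (1 - Λ * u ^ 2) * p ≤ c * b * su / 8 := by
    have hu2le : u ^ 2 ≤ 1 := by
      have := mul_nonneg (sub_nonneg.mpr hu1) (by linarith only [hu] : (0:ℝ) ≤ 1 + u)
      nlinarith only [this]
    have h1L : 1 - Λ * u ^ 2 ≤ L := by
      have e1 : (-Λ) * u ^ 2 ≤ |Λ| * u ^ 2 :=
        mul_le_mul_of_nonneg_right (neg_le_abs Λ) (sq_nonneg u)
      have e2 : |Λ| * u ^ 2 ≤ |Λ| * 1 :=
        mul_le_mul_of_nonneg_left hu2le (abs_nonneg Λ)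
      nlinarith only [e1, e2, hL]
    have hup : (0:ℝ) ≤ u * p := by positivity
    have h2 : u * (1 - Λ * u ^ 2) * p ≤ L * (u * p) := by
      have := mul_le_mul_of_nonneg_right h1L hup
      nlinarith only [this]
    have husu : u * su ≤ r₁ * sr :=
      mul_le_mul hur hsusr hsupos.le (le_trans hu.le hur)
    have k1 : u * u ≤ (r₁ * sr) * su := by
      have e := mul_le_mul_of_nonneg_right husu hsupos.le
      nlinarith only [e, hsu2]
    have k3 : u * su ≤ r₁ * su := mul_le_mul_of_nonneg_right hur hsupos.le
    have h3 : u * p ≤ a * ((r₁ * sr) * su) + b * (r₁ * su) := by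
      rw [hp]
      nlinarith only [mul_le_mul_of_nonneg_left k1 ha.le,
        mul_le_mul_of_nonneg_left k3 hbpos.le]
    have h5 := mul_le_mul_of_nonneg_left h3 hLpos.le
    have h6 := mul_le_mul_of_nonneg_right hb2 hsupos.le
    have h7 := mul_le_mul_of_nonneg_right hC₁ (by positivity : (0:ℝ) ≤ b * su)
    nlinarith only [h2, h5, h6, h7]
  -- bound on the M²-term
  have t4 : M ^ 2 * (u / (4 * p)) ≤ c * b * su / 16 := by
    have h41 : u / (4 * p) ≤ su / (4 * b) := by
      rw [div_le_div_iff₀ (by positivity) (by positivity)]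
      have e := mul_le_mul_of_nonneg_left hbsup hsupos.le
      have e2 : su * (b * su) = b * u := by rw [← hsu2]; ring
      nlinarith only [e, e2]
    have h42 : M ^ 2 * (u / (4 * p)) ≤ M ^ 2 * (su / (4 * b)) :=
      mul_le_mul_of_nonneg_left h41 (sq_nonneg M)
    have h43 : M ^ 2 * (su / (4 * b)) ≤ c * b * su / 16 := by
      have e0 : M ^ 2 * (su / (4 * b)) = (M ^ 2 * su) / (4 * b) := by ring
      rw [e0, div_le_div_iff₀ (by positivity) (by norm_num : (0:ℝ) < 16)]
      nlinarith only [mul_le_mul_of_nonneg_right hb3 hsupos.le]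
    linarith only [h42, h43]
  linarith only [t1, t2, t3, t4, hcb]

lemma vbound (Λ R : ℝ) (A w : ℝ → ℝ)
    (hv_diff : ∀ r ∈ Ioo (0:ℝ) R, DifferentiableAt ℝ (deriv w) r)
    (heq2 : ∀ r ∈ Ioo (0:ℝ) R, r ^ 2 * A r * deriv (deriv w) r
      + r * Phi Λ A w r * deriv w r + w r * (1 - (w r) ^ 2) = 0)
    (hApos : ∀ r ∈ Ioo (0:ℝ) R, 0 < A r)
    (c r₁ : ℝ) (hc : 0 < c) (hr₁0 : 0 < r₁) (hr₁R : r₁ < R) (hr₁1 : r₁ ≤ 1)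
    (hh : ∀ t ∈ Ioc (0:ℝ) r₁, c / 2 ≤ t * A t)
    (hC₁ : 16 * (1 + |Λ|) * r₁ ≤ c)
    (a b M : ℝ) (ha : 0 < a) (hb1 : 1 ≤ b)
    (hb2 : 16 * (1 + |Λ|) * (a * (r₁ * Real.sqrt r₁)) ≤ b * c)
    (hb3 : 4 * M ^ 2 ≤ b ^ 2 * c)
    (s : ℝ) (hs0 : 0 < s) (hsr : s ≤ r₁)
    (hwM : ∀ t ∈ Icc s r₁, |w t| ≤ M)
    (hend : |deriv w r₁| < a * r₁) :
    ∀ t ∈ Icc s r₁, |deriv w t| < a * t + b * Real.sqrt t := by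
  have hIccsub : Icc s r₁ ⊆ Ioo 0 R := fun x hx =>
    ⟨lt_of_lt_of_le hs0 hx.1, lt_of_le_of_lt hx.2 hr₁R⟩
  have hvcont : ContinuousOn (deriv w) (Icc s r₁) := fun x hx =>
    ((hv_diff x (hIccsub hx)).continuousAt).continuousWithinAt
  have hψcont : Continuous (fun t : ℝ => a * t + b * Real.sqrt t) :=
    (continuous_const.mul continuous_id).add (continuous_const.mul Real.continuous_sqrt)
  have hr₁mem : r₁ ∈ Icc s r₁ := ⟨hsr, le_refl r₁⟩
  have main : ∀ e : ℝ, e = 1 ∨ e = -1 →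
      ∀ t ∈ Icc s r₁, e * deriv w t < a * t + b * Real.sqrt t := by
    intro e he
    apply no_cross (fun t => e * deriv w t) (fun t => a * t + b * Real.sqrt t) s r₁ hsr
    · exact (continuousOn_const.mul hvcont).sub hψcont.continuousOn
    · have h1 : e * deriv w r₁ ≤ |deriv w r₁| := by
        rcases he with rfl | rfl
        · simpa using le_abs_self (deriv w r₁)
        · simpa using neg_le_abs (deriv w r₁)
      have h2 : (0:ℝ) ≤ b * Real.sqrt r₁ := by positivity
      calc e * deriv w r₁ ≤ |deriv w r₁| := h1
        _ < a * r₁ := hend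
        _ ≤ a * r₁ + b * Real.sqrt r₁ := by linarith
    · intro u hu hequ
      have huIoo : u ∈ Ioo 0 R := hIccsub ⟨hu.1, hu.2.le⟩
      have hu0 : 0 < u := huIoo.1
      have hsu2 : Real.sqrt u * Real.sqrt u = u := Real.mul_self_sqrt hu0.le
      have hsupos : 0 < Real.sqrt u := Real.sqrt_pos.mpr hu0
      have he2 : e * e = 1 := by rcases he with rfl | rfl <;> norm_num
      -- rewrite the ODE at u
      have hode := heq2 u huIoo
      have hΦ : Phi Λ A w u = 1 - A u - (1 - (w u) ^ 2) ^ 2 / u ^ 2 - Λ * u ^ 2 := rfl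
      rw [hΦ] at hode
      have hveq : deriv w u = e * (a * u + b * Real.sqrt u) := by
        have : e * (e * deriv w u) = e * (a * u + b * Real.sqrt u) := by rw [hequ]
        calc deriv w u = e * (e * deriv w u) := by rw [← mul_assoc, he2, one_mul]
          _ = e * (a * u + b * Real.sqrt u) := this
      rw [hveq] at hode
      -- positivity of the crossing derivative
      have hXpos := core Λ (1 + |Λ|) c a b M u r₁ (A u) (w u) (1 - (w u) ^ 2) e
        (a * u + b * Real.sqrt u) (Real.sqrt u) (Real.sqrt r₁)
        le_rfl hc hu0 hu.2.le (le_trans hu.2.le hr₁1) hsu2 hsupos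
        (Real.mul_self_sqrt hr₁0.le) (Real.sqrt_pos.mpr hr₁0)
        (Real.sqrt_le_sqrt hu.2.le)
        (hh u ⟨hu0, hu.2.le⟩) (hApos u huIoo) he rfl ha hb1 hb2 hC₁
        (by
          have h := hwM u ⟨hu.1, hu.2.le⟩
          have h' := abs_le.mp h
          exact sq_le_sq' (by linarith [h'.1]) h'.2)
        hb3
      have hnum : (e * deriv (deriv w) u - (a + b * (1 / (2 * Real.sqrt u))))
          * (u ^ 2 * A u)
          = u * (A u - 1 + (1 - (w u) ^ 2) ^ 2 / u ^ 2 + Λ * u ^ 2)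
              * (a * u + b * Real.sqrt u)
            - e * (w u * (1 - (w u) ^ 2))
            - u ^ 2 * A u * (a + b / (2 * Real.sqrt u)) := by
        rcases he with rfl | rfl
        · linear_combination hode
        · linear_combination -hode
      have hA2 : (0:ℝ) < u ^ 2 * A u := by
        have := hApos u huIoo; positivity
      have hd : 0 < e * deriv (deriv w) u - (a + b * (1 / (2 * Real.sqrt u))) := by
        have hXpos' : 0 < (e * deriv (deriv w) u - (a + b * (1 / (2 * Real.sqrt u))))
            * (u ^ 2 * A u) := by rw [hnum]; exact hXpos
        by_contra hcon
        push_neg at hcon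
        nlinarith only [hXpos', hA2, hcon]
      -- derivative of the gap function
      have hψd : HasDerivAt (fun t : ℝ => a * t + b * Real.sqrt t)
          (a + b * (1 / (2 * Real.sqrt u))) u := by
        have h1 : HasDerivAt (fun t : ℝ => a * t) a u := by
          simpa using (hasDerivAt_id u).const_mul a
        have h2 : HasDerivAt Real.sqrt (1 / (2 * Real.sqrt u)) u :=
          Real.hasDerivAt_sqrt hu0.ne'
        exact h1.add (h2.const_mul b)
      have hvd : HasDerivAt (deriv w) (deriv (deriv w) u) u :=
        (hv_diff u huIoo).hasDerivAt
      have hgd : HasDerivAt (fun t => e * deriv w t - (a * t + b * Real.sqrt t))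
          (e * deriv (deriv w) u - (a + b * (1 / (2 * Real.sqrt u)))) u :=
        (hvd.const_mul e).sub hψd
      have hev := ev_gt _ u _ hgd hd
      have hIoc : Ioc u r₁ ∈ 𝓝[>] u := Ioc_mem_nhdsGT_of_mem ⟨le_refl u, hu.2⟩
      obtain ⟨t, hgt, htmem⟩ := (hev.and (eventually_of_mem hIoc (fun x hx => hx))).exists
      refine ⟨t, htmem.1, htmem.2, ?_⟩
      have hgu : e * deriv w u - (a * u + b * Real.sqrt u) = 0 := by rw [hequ]; ring
      rw [hgu] at hgt
      linarith [hgt]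
  intro t ht
  have h1 := main 1 (Or.inl rfl) t ht
  have h2 := main (-1) (Or.inr rfl) t ht
  rw [abs_lt]
  constructor
  · nlinarith only [h2]
  · nlinarith only [h1]

/-- if `A > 0` on `(0, R)` and `A(r₀) > 1 − Λ r₀²/3` somewhere,
then `A → +∞` and `w' → 0` as `r → 0⁺`. -/
theorem stmt_2 (Λ R : ℝ) (A w : ℝ → ℝ) (hR : 0 < R)
    (hEYM : IsEYM Λ A w (Ioo 0 R))
    (hApos : ∀ r ∈ Ioo (0 : ℝ) R, 0 < A r)
    (r₀ : ℝ) (hr₀ : r₀ ∈ Ioo (0 : ℝ) R)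
    (hA : A r₀ > 1 - Λ * r₀ ^ 2 / 3) :
    Filter.Tendsto A (𝓝[>] 0) atTop ∧
    Filter.Tendsto (deriv w) (𝓝[>] 0) (𝓝 0) := by
  obtain ⟨hA_diff, hw_diff, hv_diff, heq1, heq2⟩ := hEYM
  -- the mass-type function F
  set F : ℝ → ℝ := fun r => r * (1 - A r) - Λ * r ^ 3 / 3 with hFdef
  have hFderiv : ∀ r ∈ Ioo (0:ℝ) R,
      HasDerivAt F ((1 - (w r) ^ 2) ^ 2 / r ^ 2 + 2 * A r * (deriv w r) ^ 2) r := by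
    intro r hr
    have hA' : HasDerivAt A (deriv A r) r := (hA_diff r hr).hasDerivAt
    have hsub : HasDerivAt (fun x => 1 - A x) (-deriv A r) r := by
      have h := (hasDerivAt_const r (1:ℝ)).sub hA'
      simp only [zero_sub] at h
      exact h
    have hmul : HasDerivAt (fun x => x * (1 - A x))
        (1 * (1 - A r) + r * (-deriv A r)) r := (hasDerivAt_id r).mul hsub
    have hcube : HasDerivAt (fun x : ℝ => Λ * x ^ 3 / 3) (Λ * (3 * r ^ 2) / 3) r := by
      have h3 : HasDerivAt (fun x : ℝ => x ^ 3) (3 * r ^ 2) r := by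
        simpa using hasDerivAt_pow 3 r
      exact (h3.const_mul Λ).div_const 3
    have h1 : HasDerivAt (fun x => x * (1 - A x) - Λ * x ^ 3 / 3) _ r := hmul.sub hcube
    have heq := heq1 r hr
    have hΦ : Phi Λ A w r = 1 - A r - (1 - (w r) ^ 2) ^ 2 / r ^ 2 - Λ * r ^ 2 := rfl
    rw [hΦ] at heq
    convert h1 using 1
    linarith [heq]
  have hFmono : MonotoneOn F (Ioo 0 R) := by
    apply monotoneOn_of_deriv_nonneg (convex_Ioo 0 R)
    · exact fun r hr => ((hFderiv r hr).continuousAt).continuousWithinAt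
    · rw [interior_Ioo]
      exact fun r hr => ((hFderiv r hr).differentiableAt).differentiableWithinAt
    · rw [interior_Ioo]
      intro r hr
      rw [(hFderiv r hr).deriv]
      have h1 := hApos r hr
      positivity
  -- the constant c
  set c : ℝ := r₀ * (A r₀ - 1) + Λ * r₀ ^ 3 / 3 with hcdef
  have hcF : F r₀ = -c := by rw [hFdef, hcdef]; ring
  have hc : 0 < c := by
    have h1 : 0 < A r₀ - 1 + Λ * r₀ ^ 2 / 3 := by linarith [hA]
    have h2 := mul_pos hr₀.1 h1
    rw [hcdef]; nlinarith only [h2, hr₀.1]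
  set L : ℝ := 1 + |Λ| with hLdef
  have hL1 : (1:ℝ) ≤ L := by rw [hLdef]; linarith [abs_nonneg Λ]
  have hLpos : (0:ℝ) < L := by linarith
  -- the radius r₁
  set r₁ : ℝ := min r₀ (min 1 (c / (16 * L))) with hr₁def
  have hr₁0 : 0 < r₁ := lt_min hr₀.1 (lt_min one_pos (by positivity))
  have hr₁r₀ : r₁ ≤ r₀ := min_le_left _ _
  have hr₁1 : r₁ ≤ 1 := le_trans (min_le_right _ _) (min_le_left _ _)
  have hr₁c : r₁ ≤ c / (16 * L) := le_trans (min_le_right _ _) (min_le_right _ _)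
  have hC₁ : 16 * L * r₁ ≤ c := by
    have h1 : r₁ * (16 * L) ≤ c := (le_div_iff₀ (by positivity)).mp hr₁c
    linarith only [h1]
  have hr₁R : r₁ < R := lt_of_le_of_lt hr₁r₀ hr₀.2
  clear_value F c L r₁
  -- F ≤ -c below r₀
  have hFle : ∀ t ∈ Ioc (0:ℝ) r₁, F t ≤ -c := by
    intro t ht
    rw [← hcF]
    exact hFmono ⟨ht.1, lt_of_le_of_lt (le_trans ht.2 hr₁r₀) hr₀.2⟩ hr₀
      (le_trans ht.2 hr₁r₀)
  -- lower bound on t * A t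
  have hh : ∀ t ∈ Ioc (0:ℝ) r₁, c / 2 ≤ t * A t := by
    intro t ht
    have hFt := hFle t ht
    rw [hFdef] at hFt
    simp only at hFt
    have ht0 : 0 < t := ht.1
    have ht1 : t ≤ 1 := le_trans ht.2 hr₁1
    have ht2 : t ^ 2 ≤ 1 := by
      nlinarith only [mul_nonneg (sub_nonneg.mpr ht1) (by linarith : (0:ℝ) ≤ 1 + t)]
    have ht3 : t ^ 3 ≤ t := by
      nlinarith only [mul_le_mul_of_nonneg_left ht2 ht0.le]
    have e1 : Λ * t ^ 3 ≤ |Λ| * t ^ 3 :=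
      mul_le_mul_of_nonneg_right (le_abs_self Λ) (by positivity)
    have e2 : |Λ| * t ^ 3 ≤ |Λ| * t := mul_le_mul_of_nonneg_left ht3 (abs_nonneg Λ)
    have e3 : |Λ| * t ≤ L * r₁ := by
      have : |Λ| ≤ L := by rw [hLdef]; linarith
      exact mul_le_mul this ht.2 ht0.le (by linarith)
    linarith only [hFt, e1, e2, e3, hC₁, ht0, hc]
  constructor
  · -- A → ∞
    have hAbig : ∀ᶠ t in 𝓝[>] (0:ℝ), c / 2 * t⁻¹ ≤ A t := by
      filter_upwards [Ioc_mem_nhdsGT_of_mem (⟨le_refl 0, hr₁0⟩ : (0:ℝ) ∈ Ico 0 r₁)]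
        with t ht
      have h1 := hh t ht
      rw [← div_eq_mul_inv, div_le_iff₀ ht.1]
      linarith [h1]
    have h1 : Tendsto (fun t : ℝ => c / 2 * t⁻¹) (𝓝[>] (0:ℝ)) atTop :=
      Tendsto.const_mul_atTop (by positivity) tendsto_inv_nhdsGT_zero
    exact tendsto_atTop_mono' _ hAbig h1
  · -- w' → 0
    have hC₁' : 16 * (1 + |Λ|) * r₁ ≤ c := by rw [← hLdef]; exact hC₁
    have ha0 : (0:ℝ) < (|deriv w r₁| + 1) / r₁ := by positivity
    obtain ⟨a, hadef⟩ : ∃ x : ℝ, x = (|deriv w r₁| + 1) / r₁ := ⟨_, rfl⟩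
    have ha : 0 < a := by rw [hadef]; exact ha0
    have hend : |deriv w r₁| < a * r₁ := by
      rw [hadef, div_mul_cancel₀ _ hr₁0.ne']; linarith
    obtain ⟨sr, hsrdef⟩ : ∃ x : ℝ, x = Real.sqrt r₁ := ⟨_, rfl⟩
    have hsr0 : 0 < sr := by rw [hsrdef]; exact Real.sqrt_pos.mpr hr₁0
    have hsr2 : sr * sr = r₁ := by rw [hsrdef]; exact Real.mul_self_sqrt hr₁0.le
    obtain ⟨sc, hscdef⟩ : ∃ x : ℝ, x = Real.sqrt c := ⟨_, rfl⟩
    have hsc0 : 0 < sc := by rw [hscdef]; exact Real.sqrt_pos.mpr hc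
    have hsc2 : sc * sc = c := by rw [hscdef]; exact Real.mul_self_sqrt hc.le
    have h16r : 16 * r₁ ≤ c := by nlinarith only [hC₁, hr₁0, hL1]
    have h4src : 4 * (sr * r₁) ≤ sc := by
      have hr3 : r₁ * r₁ ≤ 1 := by nlinarith only [hr₁0, hr₁1]
      have h1 : (4 * (sr * r₁)) * (4 * (sr * r₁)) ≤ sc * sc := by
        have e : (4 * (sr * r₁)) * (4 * (sr * r₁)) = 16 * ((sr * sr) * (r₁ * r₁)) := by
          ring
        rw [e, hsr2, hsc2]
        nlinarith only [h16r, hr3, hr₁0]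
      nlinarith only [h1, hsc0, hsr0, hr₁0, mul_pos hsr0 hr₁0]
    obtain ⟨X, hXdef⟩ : ∃ x : ℝ, x = 16 * (1 + |Λ|) * (a * (r₁ * sr)) / c := ⟨_, rfl⟩
    have hX0 : 0 ≤ X := by rw [hXdef]; positivity
    have hXc : 16 * (1 + |Λ|) * (a * (r₁ * sr)) = X * c := by
      rw [hXdef]; field_simp
    obtain ⟨D, hDdef⟩ : ∃ x : ℝ, x = |w r₁| + a * r₁ ^ 2 + (1 + X) * (sr * r₁) := ⟨_, rfl⟩
    -- the bootstrap bound |w| ≤ 2 D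
    have hWbound : ∀ r ∈ Ioc (0:ℝ) r₁, ∀ t ∈ Icc r r₁, |w t| ≤ 2 * D := by
      intro r hr
      have hIccsub : Icc r r₁ ⊆ Ioo 0 R := fun x hx =>
        ⟨lt_of_lt_of_le hr.1 hx.1, lt_of_le_of_lt hx.2 hr₁R⟩
      have hcont : ContinuousOn (fun t => |w t|) (Icc r r₁) := fun x hx =>
        ((hw_diff x (hIccsub hx)).continuousAt.continuousWithinAt).abs
      have hbdd : BddAbove ((fun t => |w t|) '' Icc r r₁) :=
        (isCompact_Icc.image_of_continuousOn hcont).bddAbove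
      have hne : (Icc r r₁).Nonempty := nonempty_Icc.mpr hr.2
      obtain ⟨W, hWdef⟩ : ∃ x : ℝ, x = sSup ((fun t => |w t|) '' Icc r r₁) := ⟨_, rfl⟩
      have hWle : ∀ t ∈ Icc r r₁, |w t| ≤ W := fun t ht => by
        rw [hWdef]; exact le_csSup hbdd (mem_image_of_mem _ ht)
      have hW0 : 0 ≤ W := le_trans (abs_nonneg _) (hWle r₁ ⟨hr.2, le_refl _⟩)
      obtain ⟨b, hbdef⟩ : ∃ x : ℝ, x = 1 + X + 2 * W / sc := ⟨_, rfl⟩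
      have hWsc : 0 ≤ 2 * W / sc := by positivity
      have hb1 : 1 ≤ b := by rw [hbdef]; linarith
      have hbX : X ≤ b := by rw [hbdef]; linarith
      have hb2 : 16 * (1 + |Λ|) * (a * (r₁ * sr)) ≤ b * c := by
        rw [hXc]; exact mul_le_mul_of_nonneg_right hbX hc.le
      have hb3 : 4 * W ^ 2 ≤ b ^ 2 * c := by
        have h1 : 2 * W / sc ≤ b := by rw [hbdef]; linarith
        have h2 : (2 * W / sc) ^ 2 ≤ b ^ 2 := pow_le_pow_left₀ (by positivity) h1 2
        have h3 : (2 * W / sc) ^ 2 * c = 4 * W ^ 2 := by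
          rw [div_pow, show sc ^ 2 = c from by rw [sq]; exact hsc2]
          field_simp
          ring
        nlinarith only [mul_le_mul_of_nonneg_right h2 hc.le, h3]
      have hvb := vbound Λ R A w hv_diff heq2 hApos c r₁ hc hr₁0 hr₁R hr₁1 hh hC₁'
        a b W ha hb1 (by rw [hsrdef] at hb2; exact hb2) hb3 r hr.1 hr.2 hWle hend
      obtain ⟨K, hKdef⟩ : ∃ x : ℝ, x = a * r₁ + b * sr := ⟨_, rfl⟩
      have hbpos : (0:ℝ) < b := lt_of_lt_of_le one_pos hb1
      have hK0 : 0 ≤ K := by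
        rw [hKdef]; nlinarith only [mul_pos ha hr₁0, mul_pos hbpos hsr0]
      have hKb : ∀ t ∈ Icc r r₁, |deriv w t| ≤ K := by
        intro t ht
        have h1 := hvb t ht
        have h2 : Real.sqrt t ≤ sr := by rw [hsrdef]; exact Real.sqrt_le_sqrt ht.2
        have h3 : a * t ≤ a * r₁ := mul_le_mul_of_nonneg_left ht.2 ha.le
        have h4 : b * Real.sqrt t ≤ b * sr := mul_le_mul_of_nonneg_left h2 hbpos.le
        rw [hKdef]; linarith
      have hmvt : ∀ t ∈ Icc r r₁, |w t - w r₁| ≤ K * (r₁ - t) := by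
        intro t ht
        have hmv := Convex.norm_image_sub_le_of_norm_hasDerivWithin_le
          (f := w) (f' := deriv w) (s := Icc r r₁) (C := K)
          (fun x hx => ((hw_diff x (hIccsub hx)).hasDerivAt).hasDerivWithinAt)
          (fun x hx => by rw [Real.norm_eq_abs]; exact hKb x hx)
          (convex_Icc r r₁) (⟨hr.2, le_refl r₁⟩ : r₁ ∈ Icc r r₁) ht
        rw [Real.norm_eq_abs, Real.norm_eq_abs] at hmv
        have habs : |t - r₁| = r₁ - t := by
          rw [abs_sub_comm]; exact abs_of_nonneg (by linarith [ht.2])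
        rw [habs] at hmv
        exact hmv
      have hWD : W ≤ D + W / 2 := by
        rw [hWdef]
        apply csSup_le (hne.image _)
        rintro y ⟨t, ht, rfl⟩
        simp only
        have h1 := hmvt t ht
        have h2 : |w t| ≤ |w r₁| + K * (r₁ - t) := by
          have := abs_sub_abs_le_abs_sub (w t) (w r₁); linarith
        have h3 : K * (r₁ - t) ≤ K * r₁ := by
          apply mul_le_mul_of_nonneg_left ?_ hK0
          linarith [ht.1, hr.1]
        have h5 : (2 * W / sc) * (sr * r₁) ≤ W / 2 := by
          rw [div_mul_eq_mul_div, div_le_iff₀ hsc0]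
          nlinarith only [mul_le_mul_of_nonneg_left h4src hW0]
        have h4 : K * r₁ ≤ a * r₁ ^ 2 + (1 + X) * (sr * r₁) + W / 2 := by
          rw [hKdef, hbdef]
          nlinarith only [h5]
        rw [hDdef]
        linarith
      have hW2D : W ≤ 2 * D := by linarith
      intro t ht
      exact le_trans (hWle t ht) hW2D
    have hwM : ∀ t ∈ Ioc (0:ℝ) r₁, |w t| ≤ 2 * D :=
      fun t ht => hWbound t ht t ⟨le_refl t, ht.2⟩
    have hD0 : 0 ≤ 2 * D := le_trans (abs_nonneg _) (hwM r₁ ⟨hr₁0, le_refl _⟩)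
    -- the final comparison function
    obtain ⟨b, hbdef⟩ : ∃ x : ℝ, x = 1 + X + 2 * (2 * D) / sc := ⟨_, rfl⟩
    have hDsc : 0 ≤ 2 * (2 * D) / sc := by positivity
    have hb1 : 1 ≤ b := by rw [hbdef]; linarith
    have hbX : X ≤ b := by rw [hbdef]; linarith
    have hb2 : 16 * (1 + |Λ|) * (a * (r₁ * sr)) ≤ b * c := by
      rw [hXc]; exact mul_le_mul_of_nonneg_right hbX hc.le
    have hb3 : 4 * (2 * D) ^ 2 ≤ b ^ 2 * c := by
      have h1 : 2 * (2 * D) / sc ≤ b := by rw [hbdef]; linarith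
      have h2 : (2 * (2 * D) / sc) ^ 2 ≤ b ^ 2 := pow_le_pow_left₀ (by positivity) h1 2
      have h3 : (2 * (2 * D) / sc) ^ 2 * c = 4 * (2 * D) ^ 2 := by
        rw [div_pow, show sc ^ 2 = c from by rw [sq]; exact hsc2]
        field_simp
        ring
      nlinarith only [mul_le_mul_of_nonneg_right h2 hc.le, h3]
    have hfinal : ∀ t ∈ Ioc (0:ℝ) r₁, |deriv w t| < a * t + b * Real.sqrt t := by
      intro t ht
      exact vbound Λ R A w hv_diff heq2 hApos c r₁ hc hr₁0 hr₁R hr₁1 hh hC₁'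
        a b (2 * D) ha hb1 (by rw [hsrdef] at hb2; exact hb2) hb3 t ht.1 ht.2
        (fun x hx => hwM x ⟨lt_of_lt_of_le ht.1 hx.1, hx.2⟩) hend t ⟨le_refl t, ht.2⟩
    -- squeeze
    have hco : Continuous (fun t : ℝ => a * t + b * Real.sqrt t) :=
      (continuous_const.mul continuous_id).add (continuous_const.mul Real.continuous_sqrt)
    have hg : Tendsto (fun t : ℝ => a * t + b * Real.sqrt t) (𝓝[>] (0:ℝ)) (𝓝 0) := by
      have h0 := hco.tendsto 0
      simp only [Real.sqrt_zero, mul_zero, add_zero] at h0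
      exact h0.mono_left nhdsWithin_le_nhds
    have hg' : Tendsto (fun t : ℝ => -(a * t + b * Real.sqrt t)) (𝓝[>] (0:ℝ)) (𝓝 0) := by
      simpa using hg.neg
    apply tendsto_of_tendsto_of_tendsto_of_le_of_le' hg' hg
    · filter_upwards [Ioc_mem_nhdsGT_of_mem (⟨le_refl 0, hr₁0⟩ : (0:ℝ) ∈ Ico 0 r₁)]
        with t ht
      have h1 := (abs_lt.mp (hfinal t ht)).1
      linarith
    · filter_upwards [Ioc_mem_nhdsGT_of_mem (⟨le_refl 0, hr₁0⟩ : (0:ℝ) ∈ Ico 0 r₁)]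
        with t ht
      exact (abs_lt.mp (hfinal t ht)).2.le
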